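/- Let M be a right R-module. Then M is an SIP module if and only if for any two direct summands A₁ and A₂ of M with A₁ ≅ A₂, the submodule A₁ ∩ A₂ is a direct summand of M. -/

import Mathlib

universe u v w

section Defs

variable {S : Type u} [Ring S]

/-- A submodule `A` is a direct summand of `M`. -/
def IsDirectSummand {M : Type v} [AddCommGroup M] [Module S M] (A : Submodule S M) : Prop :=
  ∃ B : Submodule S M, A ⊓ B = ⊥ ∧ A ⊔ B = ⊤

/-- `A` is an essential submodule of `B`. -/
def IsEssentialIn {M : Type v} [AddCommGroup M] [Module S M] (A B : Submodule S M) : Prop :=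
  A ≤ B ∧ ∀ K : Submodule S M, K ≤ B → K ≠ ⊥ → A ⊓ K ≠ ⊥

/-- `A` is essential in some direct summand of `M`. -/
def EssentialInSummand {M : Type v} [AddCommGroup M] [Module S M] (A : Submodule S M) : Prop :=
  ∃ D : Submodule S M, IsDirectSummand D ∧ IsEssentialIn A D

/-- `A` is a small (superfluous) submodule of `M`. -/
def IsSmallSubmodule {M : Type v} [AddCommGroup M] [Module S M] (A : Submodule S M) : Prop :=
  ∀ K : Submodule S M, A ⊔ K = ⊤ → K = ⊤

/-- `A` lies above the direct summand `D` of `M`, i.e. `D ≤ A` and `A/D` is small in `M/D`. -/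
def LiesAbove {M : Type v} [AddCommGroup M] [Module S M] (A D : Submodule S M) : Prop :=
  IsDirectSummand D ∧ D ≤ A ∧ IsSmallSubmodule (Submodule.map D.mkQ A)

/-- `A` lies above some direct summand of `M`. -/
def LiesAboveSummand {M : Type v} [AddCommGroup M] [Module S M] (A : Submodule S M) : Prop :=
  ∃ D : Submodule S M, LiesAbove A D

end Defs

section ModDefs

variable (S : Type u) [Ring S]

/-- SSP: the sum of any two direct summands is a direct summand. -/
def HasSSP (M : Type v) [AddCommGroup M] [Module S M] : Prop :=
  ∀ A B : Submodule S M, IsDirectSummand A → IsDirectSummand B → IsDirectSummand (A ⊔ B)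

/-- SIP: the intersection of any two direct summands is a direct summand. -/
def HasSIP (M : Type v) [AddCommGroup M] [Module S M] : Prop :=
  ∀ A B : Submodule S M, IsDirectSummand A → IsDirectSummand B → IsDirectSummand (A ⊓ B)

/-- SIP-CS: the intersection of any finite family of direct summands is essential in a
direct summand. -/
def IsSIPCS (M : Type v) [AddCommGroup M] [Module S M] : Prop :=
  ∀ (ι : Type) [Fintype ι] (A : ι → Submodule S M),
    (∀ i, IsDirectSummand (A i)) → EssentialInSummand (⨅ i, A i)

/-- SSP-lifting: if each member of a finite family of submodules lies above a direct summand,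
then their sum lies above a direct summand. -/
def IsSSPLifting (M : Type v) [AddCommGroup M] [Module S M] : Prop :=
  ∀ (ι : Type) [Fintype ι] (A : ι → Submodule S M),
    (∀ i, LiesAboveSummand (A i)) → LiesAboveSummand (⨆ i, A i)

/-- C2 condition: every submodule isomorphic to a direct summand is a direct summand. -/
def HasC2 (M : Type v) [AddCommGroup M] [Module S M] : Prop :=
  ∀ A B : Submodule S M, IsDirectSummand B → Nonempty (A ≃ₗ[S] B) → IsDirectSummand A

/-- C3 condition: the sum of two direct summands with zero intersection is a direct summand. -/
def HasC3 (M : Type v) [AddCommGroup M] [Module S M] : Prop :=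
  ∀ A B : Submodule S M, IsDirectSummand A → IsDirectSummand B → A ⊓ B = ⊥ →
    IsDirectSummand (A ⊔ B)

/-- D2 condition: if `M/A` is isomorphic to a direct summand of `M` then `A` is a direct
summand. -/
def HasD2 (M : Type v) [AddCommGroup M] [Module S M] : Prop :=
  ∀ A : Submodule S M, (∃ B : Submodule S M, IsDirectSummand B ∧
    Nonempty ((M ⧸ A) ≃ₗ[S] B)) → IsDirectSummand A

/-- D3 condition: if two direct summands sum to `M`, their intersection is a direct summand. -/
def IsD3Module (M : Type v) [AddCommGroup M] [Module S M] : Prop :=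
  ∀ A B : Submodule S M, IsDirectSummand A → IsDirectSummand B → A ⊔ B = ⊤ →
    IsDirectSummand (A ⊓ B)

/-- `M` is relatively CS-Rickart to `N`. -/
def RelCSRickart (M : Type v) (N : Type w) [AddCommGroup M] [Module S M]
    [AddCommGroup N] [Module S N] : Prop :=
  ∀ φ : M →ₗ[S] N, EssentialInSummand (LinearMap.ker φ)

/-- `M` is relatively d-CS-Rickart to `N`. -/
def RelDCSRickart (M : Type v) (N : Type w) [AddCommGroup M] [Module S M]
    [AddCommGroup N] [Module S N] : Prop :=
  ∀ φ : N →ₗ[S] M, LiesAboveSummand (LinearMap.range φ)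

/-- CS-Rickart module. -/
def IsCSRickart (M : Type v) [AddCommGroup M] [Module S M] : Prop :=
  RelCSRickart S M M

/-- d-CS-Rickart module. -/
def IsDCSRickart (M : Type v) [AddCommGroup M] [Module S M] : Prop :=
  RelDCSRickart S M M

/-- `M` has an `Ω`-cover, where `Ω` is the class of modules satisfying `P`. -/
def HasCover (P : ModuleCat.{v} S → Prop) (M : Type v) [AddCommGroup M] [Module S M] : Prop :=
  ∃ (E : ModuleCat.{v} S) (g : E →ₗ[S] M), P E ∧
    (∀ (E' : ModuleCat.{v} S), P E' → ∀ g' : E' →ₗ[S] M,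
      ∃ h : E' →ₗ[S] E, g ∘ₗ h = g') ∧
    (∀ h : E →ₗ[S] E, g ∘ₗ h = g → Function.Bijective h)

/-- `M` has an `Ω`-envelope, where `Ω` is the class of modules satisfying `P`. -/
def HasEnvelope (P : ModuleCat.{v} S → Prop) (M : Type v) [AddCommGroup M] [Module S M] : Prop :=
  ∃ (E : ModuleCat.{v} S) (g : M →ₗ[S] E), P E ∧
    (∀ (E' : ModuleCat.{v} S), P E' → ∀ g' : M →ₗ[S] E',
      ∃ h : E →ₗ[S] E', h ∘ₗ g = g') ∧
    (∀ h : E →ₗ[S] E, h ∘ₗ g = g → Function.Bijective h)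

/-- `M` is 2-generated. -/
def TwoGenerated (M : Type v) [AddCommGroup M] [Module S M] : Prop :=
  ∃ a b : M, Submodule.span S ({a, b} : Set M) = ⊤

/-- `M` is finitely cogenerated. -/
def FinitelyCogenerated (M : Type v) [AddCommGroup M] [Module S M] : Prop :=
  ∀ 𝒜 : Set (Submodule S M), sInf 𝒜 = ⊥ →
    ∃ ℬ ⊆ 𝒜, ℬ.Finite ∧ sInf ℬ = ⊥

/-- The socle of `M`: the sum of all simple submodules. -/
def SocleOf (M : Type v) [AddCommGroup M] [Module S M] : Submodule S M :=
  sSup {A : Submodule S M | IsSimpleModule S ↥A}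

/-- An indecomposable module: nonzero, and its only direct summands are `0` and itself. -/
def IsIndecomposable (M : Type v) [AddCommGroup M] [Module S M] : Prop :=
  (⊤ : Submodule S M) ≠ ⊥ ∧
    ∀ A : Submodule S M, IsDirectSummand A → A = ⊥ ∨ A = ⊤

end ModDefs

section RingDefs

variable (R : Type u) [Ring R]

/-- The right annihilator of an element of a right `R`-module, as a right ideal of `R`. -/
def rightAnnihilator {M : Type v} [AddCommGroup M] [Module Rᵐᵒᵖ M] (m : M) :
    Submodule Rᵐᵒᵖ R where
  carrier := {r : R | MulOpposite.op r • m = 0}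
  add_mem' := by
    intro a b ha hb
    simp only [Set.mem_setOf_eq] at *
    rw [MulOpposite.op_add, add_smul, ha, hb, add_zero]
  zero_mem' := by simp
  smul_mem' := by
    intro c x hx
    simp only [Set.mem_setOf_eq] at *
    have : MulOpposite.op (c • x) = c * MulOpposite.op x := by
      rw [MulOpposite.smul_eq_mul_unop]
      simp [MulOpposite.op_mul]
    rw [this, mul_smul, hx, smul_zero]

/-- `M` is a nonsingular right `R`-module. -/
def IsNonsingular (M : Type v) [AddCommGroup M] [Module Rᵐᵒᵖ M] : Prop :=
  ∀ m : M, IsEssentialIn (rightAnnihilator R m) (⊤ : Submodule Rᵐᵒᵖ R) → m = 0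

/-- `R` is a right V-ring: every simple right `R`-module is injective. -/
def IsRightVRing : Prop :=
  ∀ (N : Type u) [AddCommGroup N] [Module Rᵐᵒᵖ N],
    IsSimpleModule Rᵐᵒᵖ N → Module.Injective Rᵐᵒᵖ N

/-- `R` is semiregular: `R/J(R)` is von Neumann regular and idempotents lift modulo `J(R)`. -/
def IsSemiregularRing : Prop :=
  (∀ a : R, ∃ b : R, a - a * b * a ∈ Ideal.jacobson (⊥ : Ideal R) ∧ b = b * a * b) ∧
  (∀ a : R, a * a - a ∈ Ideal.jacobson (⊥ : Ideal R) →
    ∃ e : R, e * e = e ∧ e - a ∈ Ideal.jacobson (⊥ : Ideal R))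

end RingDefs

section Aux

variable {S : Type u} [Ring S] {M : Type v} [AddCommGroup M] [Module S M]

/-- If a submodule admits a linear projection onto it, it is a direct summand. -/
lemma summand_of_proj (N : Submodule S M) (π : M →ₗ[S] M)
    (h1 : ∀ x, π x ∈ N) (h2 : ∀ n ∈ N, π n = n) : IsDirectSummand N := by
  refine ⟨LinearMap.ker π, ?_, ?_⟩
  · rw [eq_bot_iff]
    intro x hx
    obtain ⟨hxN, hxk⟩ := Submodule.mem_inf.1 hx
    have : π x = 0 := hxk
    have hx2 := h2 x hxN
    simp only [Submodule.mem_bot]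
    rw [← hx2, this]
  · rw [eq_top_iff]
    intro x _
    have hdecomp : x = π x + (x - π x) := by abel
    refine hdecomp ▸ Submodule.add_mem_sup (h1 x) ?_
    have : π (x - π x) = 0 := by
      rw [map_sub, h2 (π x) (h1 x), sub_self]
    exact this

/-- A direct summand admits a linear projection onto it. -/
lemma proj_of_summand {N : Submodule S M} (h : IsDirectSummand N) :
    ∃ π : M →ₗ[S] M, (∀ x, π x ∈ N) ∧ (∀ n ∈ N, π n = n) := by
  obtain ⟨N', hinf, hsup⟩ := h
  have hc : IsCompl N N' := ⟨disjoint_iff.2 hinf, codisjoint_iff.2 hsup⟩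
  refine ⟨N.subtype ∘ₗ N.projectionOnto N' hc, ?_, ?_⟩
  · intro x
    exact (N.projectionOnto N' hc x).2
  · intro n hn
    have := Submodule.linearProjOfIsCompl_apply_left hc ⟨n, hn⟩
    simp [this]

/-- The image of a direct summand under a linear automorphism is a direct summand. -/
lemma summand_map (U : M ≃ₗ[S] M) {A : Submodule S M} (h : IsDirectSummand A) :
    IsDirectSummand (A.map (U : M →ₗ[S] M)) := by
  obtain ⟨e, he1, he2⟩ := proj_of_summand h
  refine summand_of_proj _ ((U : M →ₗ[S] M) ∘ₗ e ∘ₗ (U.symm : M →ₗ[S] M)) ?_ ?_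
  · intro x
    exact Submodule.mem_map_of_mem (he1 (U.symm x))
  · rintro n hn
    obtain ⟨a, ha, rfl⟩ := hn
    simp only [LinearMap.comp_apply, LinearEquiv.coe_coe]
    rw [U.symm_apply_apply, he2 a ha]

end Aux

/-- `M` is SIP iff the intersection of any two isomorphic direct summands is a
direct summand. -/
theorem statement_3 (R : Type u) [Ring R] (M : Type v) [AddCommGroup M] [Module Rᵐᵒᵖ M] :
    HasSIP Rᵐᵒᵖ M ↔
      ∀ A₁ A₂ : Submodule Rᵐᵒᵖ M, IsDirectSummand A₁ → IsDirectSummand A₂ →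
        Nonempty (A₁ ≃ₗ[Rᵐᵒᵖ] A₂) → IsDirectSummand (A₁ ⊓ A₂) := by
  constructor
  · intro h A₁ A₂ hA₁ hA₂ _
    exact h A₁ A₂ hA₁ hA₂
  · intro h A B hA hB
    obtain ⟨e, heA, heId⟩ := proj_of_summand hA
    obtain ⟨f, hfB, hfId⟩ := proj_of_summand hB
    -- t = (1-e) ∘ f ∘ e ; t ∘ t = 0
    set t : M →ₗ[Rᵐᵒᵖ] M := (LinearMap.id - e) ∘ₗ f ∘ₗ e with ht
    have htapp : ∀ x, t x = f (e x) - e (f (e x)) := by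
      intro x; simp [ht, LinearMap.sub_apply]
    have hee : ∀ x, e (e x) = e x := fun x => heId _ (heA x)
    have het : ∀ x, e (t x) = 0 := by
      intro x
      rw [htapp, map_sub, hee, sub_self]
    have htt : ∀ x, t (t x) = 0 := by
      intro x
      rw [htapp (t x), het, map_zero, map_zero, sub_self]
    -- U = 1 + t is an automorphism with inverse 1 - t
    have hcomp1 : ((LinearMap.id + t) ∘ₗ (LinearMap.id - t) : M →ₗ[Rᵐᵒᵖ] M) = LinearMap.id := by
      ext x
      simp only [LinearMap.comp_apply, LinearMap.add_apply, LinearMap.sub_apply,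
        LinearMap.id_apply, map_sub, map_add]
      rw [htt]; abel
    have hcomp2 : ((LinearMap.id - t) ∘ₗ (LinearMap.id + t) : M →ₗ[Rᵐᵒᵖ] M) = LinearMap.id := by
      ext x
      simp only [LinearMap.comp_apply, LinearMap.add_apply, LinearMap.sub_apply,
        LinearMap.id_apply, map_sub, map_add]
      rw [htt]; abel
    set U : M ≃ₗ[Rᵐᵒᵖ] M := LinearEquiv.ofLinear (LinearMap.id + t) (LinearMap.id - t)
      hcomp1 hcomp2 with hU
    have hUapp : ∀ x, U x = x + t x := by
      intro x; simp [hU, LinearEquiv.ofLinear_apply]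
    -- K = A ⊓ U(A) = {a ∈ A | f a ∈ A}
    set K : Submodule Rᵐᵒᵖ M := A ⊓ (A.map (U : M →ₗ[Rᵐᵒᵖ] M)) with hKdef
    have hKmem : ∀ x, x ∈ K ↔ x ∈ A ∧ f x ∈ A := by
      intro x
      constructor
      · rintro ⟨hxA, hxU⟩
        obtain ⟨a, haA, hax⟩ := hxU
        have hax' : a + t a = x := by
          rw [← hUapp]; exact hax
        have hex : e x = x := heId x hxA
        have hea : e a = a := heId a haA
        have : e x = a := by
          rw [← hax', map_add, het, add_zero, hea]
        have hxa : x = a := by rw [← hex, this]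
        have htx : t x = 0 := by
          rw [hxa] at hax'
          rw [hxa]
          exact add_eq_left.mp hax'
        -- f x ∈ A
        have : f x - e (f x) = 0 := by
          have := htx
          rw [htapp, hex] at this
          exact this
        have hfx : f x = e (f x) := by
          have h' := sub_eq_zero.1 this
          exact h'
        exact ⟨hxA, hfx ▸ heA (f x)⟩
      · rintro ⟨hxA, hfxA⟩
        refine ⟨hxA, ?_⟩
        have hex : e x = x := heId x hxA
        have htx : t x = 0 := by
          rw [htapp, hex, heId _ hfxA, sub_self]
        refine ⟨x, hxA, ?_⟩
        show U x = x
        rw [hUapp, htx, add_zero]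
    -- K is a direct summand by hypothesis
    have hKsummand : IsDirectSummand K := by
      refine h A (A.map (U : M →ₗ[Rᵐᵒᵖ] M)) hA (summand_map U hA) ?_
      exact ⟨Submodule.equivMapOfInjective (U : M →ₗ[Rᵐᵒᵖ] M) U.injective A⟩
    obtain ⟨p, hpK, hpId⟩ := proj_of_summand hKsummand
    -- f ∘ p is a projection onto A ⊓ B
    refine summand_of_proj (A ⊓ B) (f ∘ₗ p) ?_ ?_
    · intro x
      have hpx := hpK x
      have := (hKmem (p x)).1 hpx
      exact Submodule.mem_inf.2 ⟨this.2, hfB (p x)⟩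
    · intro n hn
      obtain ⟨hnA, hnB⟩ := Submodule.mem_inf.1 hn
      have hfn : f n = n := hfId n hnB
      have hnK : n ∈ K := (hKmem n).2 ⟨hnA, by rw [hfn]; exact hnA⟩
      simp only [LinearMap.comp_apply]
      rw [hpId n hnK, hfn]
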